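/- Define [n] = 2·sin(n·λ/2) for a real number λ. For every positive integer n, n·[1]^2 = ∑_{μ ⊢ n} (1/(|Aut μ|·∏_i μ_i))·∏_i [μ_i]^2, where the sum is over all partitions μ of n, μ_i are the parts of μ, and |Aut μ| is the number of automorphisms of the partition (the product of the factorials of the multiplicities of each part size). -/

import Mathlib

open Finset

namespace Stmt5Aux

/-- combinatorial weight -/
def zfac (s : Multiset ℕ) : ℕ :=
  (∏ k ∈ s.toFinset, (s.count k).factorial) * s.prod

lemma zfac_pos {s : Multiset ℕ} (hs : ∀ i ∈ s, 0 < i) : 0 < zfac s := by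
  unfold zfac
  apply Nat.mul_pos
  · exact Finset.prod_pos (fun k _ => Nat.factorial_pos _)
  · exact Multiset.prod_pos hs

lemma zfac_cons (m : ℕ) (s : Multiset ℕ) :
    zfac (m ::ₘ s) = (m * (s.count m + 1)) * zfac s := by
  unfold zfac
  rw [Multiset.prod_cons]
  have hfac : (∏ k ∈ (m ::ₘ s).toFinset, ((m ::ₘ s).count k).factorial)
      = (s.count m + 1) * ∏ k ∈ s.toFinset, (s.count k).factorial := by
    by_cases hm : m ∈ s.toFinset
    · have ht : (m ::ₘ s).toFinset = s.toFinset := by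
        rw [Multiset.toFinset_cons, Finset.insert_eq_self]; exact hm
      rw [ht, ← Finset.mul_prod_erase _ (fun k => ((m ::ₘ s).count k).factorial) hm,
        ← Finset.mul_prod_erase _ (fun k => (s.count k).factorial) hm,
        Multiset.count_cons_self, Nat.factorial_succ, mul_assoc]
      congr 1
      congr 1
      apply Finset.prod_congr rfl
      intro k hk
      rw [Multiset.count_cons_of_ne (Finset.ne_of_mem_erase hk)]
    · have hcm : s.count m = 0 := by
        exact Multiset.count_eq_zero.mpr (fun h => hm (Multiset.mem_toFinset.mpr h))
      rw [Multiset.toFinset_cons, Finset.prod_insert hm, Multiset.count_cons_self, hcm]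
      simp only [Nat.factorial_one, zero_add, one_mul]
      apply Finset.prod_congr rfl
      intro k hk
      have : k ≠ m := by rintro rfl; exact hm hk
      rw [Multiset.count_cons_of_ne this]
  rw [hfac]; ring

end Stmt5Aux

namespace Stmt5Aux

noncomputable def aa (lam : ℝ) (p : ℕ) : ℝ := (2 * Real.sin (p * lam / 2))^2

noncomputable def g (lam : ℝ) (n : ℕ) : ℝ :=
  ∑ μ : Nat.Partition n, (1 / (zfac μ.parts : ℝ)) * ((μ.parts.map (aa lam)).prod)

lemma g_zero (lam : ℝ) : g lam 0 = 1 := by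
  rw [g, Fintype.sum_unique]
  have h : (default : Nat.Partition 0).parts = 0 := rfl
  simp [h, zfac]

lemma g_rec (lam : ℝ) (n : ℕ) :
    (n : ℝ) * g lam n = ∑ m ∈ Icc 1 n, aa lam m * g lam (n - m) := by
  rw [g, Finset.mul_sum]
  have step1 : ∀ μ : Nat.Partition n,
      (n : ℝ) * ((1 / (zfac μ.parts : ℝ)) * ((μ.parts.map (aa lam)).prod)) =
      ∑ m ∈ μ.parts.toFinset,
        (1 / (zfac (μ.parts.erase m) : ℝ)) * aa lam m *
          (((μ.parts.erase m).map (aa lam)).prod) := by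
    intro μ
    have hn : (n : ℝ) = ∑ m ∈ μ.parts.toFinset, ((μ.parts.count m : ℝ) * m) := by
      have := Finset.sum_multiset_map_count μ.parts (id : ℕ → ℕ)
      simp only [Multiset.map_id, smul_eq_mul, μ.parts_sum] at this
      conv_lhs => rw [this]
      push_cast
      simp [id]
    rw [hn, Finset.sum_mul]
    apply Finset.sum_congr rfl
    intro m hm
    have hmem : m ∈ μ.parts := Multiset.mem_toFinset.mp hm
    have hcons : m ::ₘ μ.parts.erase m = μ.parts := Multiset.cons_erase hmem
    have hz : (zfac μ.parts : ℝ) =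
        (m : ℝ) * (μ.parts.count m : ℝ) * (zfac (μ.parts.erase m) : ℝ) := by
      rw [← hcons, zfac_cons]
      have : (μ.parts.erase m).count m + 1 = (m ::ₘ μ.parts.erase m).count m := by
        rw [Multiset.count_cons_self]
      rw [this, hcons]
      push_cast
      ring
    have hzpos : 0 < zfac (μ.parts.erase m) :=
      zfac_pos (fun i hi => μ.parts_pos (Multiset.mem_of_mem_erase hi))
    have hmpos : 0 < m := μ.parts_pos hmem
    have hcpos : 0 < μ.parts.count m := Multiset.count_pos.mpr hmem
    have hA : (μ.parts.map (aa lam)).prod =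
        aa lam m * (((μ.parts.erase m).map (aa lam)).prod) :=
      (Multiset.prod_map_erase (f := aa lam) hmem).symm
    rw [hA, hz]
    have h1 : (m : ℝ) ≠ 0 := Nat.cast_ne_zero.mpr hmpos.ne'
    have h2 : (μ.parts.count m : ℝ) ≠ 0 := Nat.cast_ne_zero.mpr hcpos.ne'
    have h3 : (zfac (μ.parts.erase m) : ℝ) ≠ 0 := Nat.cast_ne_zero.mpr hzpos.ne'
    field_simp
  rw [Finset.sum_congr rfl (fun μ _ => step1 μ)]
  -- now the bijection
  rw [← Finset.sum_sigma (univ : Finset (Nat.Partition n)) (fun μ => μ.parts.toFinset)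
    (fun p => (1 / (zfac (p.1.parts.erase p.2) : ℝ)) * aa lam p.2 *
      (((p.1.parts.erase p.2).map (aa lam)).prod))]
  have hrhs : ∀ m ∈ Icc 1 n, aa lam m * g lam (n - m) =
      ∑ ν : Nat.Partition (n - m),
        (1 / (zfac ν.parts : ℝ)) * aa lam m * ((ν.parts.map (aa lam)).prod) := by
    intro m _
    rw [g, Finset.mul_sum]
    apply Finset.sum_congr rfl
    intro ν _
    ring
  rw [Finset.sum_congr rfl hrhs,
    ← Finset.sum_sigma (Icc 1 n) (fun m => (univ : Finset (Nat.Partition (n - m))))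
      (fun p => (1 / (zfac p.2.parts : ℝ)) * aa lam p.1 * ((p.2.parts.map (aa lam)).prod))]
  refine Finset.sum_bij' (fun p hp => ?_) (fun q hq => ?_) ?_ ?_ ?_ ?_ ?_
  · -- forward map
    exact ⟨p.2, ⟨p.1.parts.erase p.2, fun hi => p.1.parts_pos (Multiset.mem_of_mem_erase hi), by
      have hmem : p.2 ∈ p.1.parts :=
        Multiset.mem_toFinset.mp (Finset.mem_sigma.mp hp).2
      have := congrArg Multiset.sum (Multiset.cons_erase hmem)
      rw [Multiset.sum_cons, p.1.parts_sum] at this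
      omega⟩⟩
  · -- backward map
    exact ⟨⟨q.1 ::ₘ q.2.parts, by
        intro i hi
        rcases Multiset.mem_cons.mp hi with h | h
        · subst h; exact (Finset.mem_Icc.mp (Finset.mem_sigma.mp hq).1).1
        · exact q.2.parts_pos h, by
        rw [Multiset.sum_cons, q.2.parts_sum]
        have := (Finset.mem_Icc.mp (Finset.mem_sigma.mp hq).1)
        omega⟩, q.1⟩
  · intro p hp
    rw [Finset.mem_sigma]
    constructor
    · have hmem : p.2 ∈ p.1.parts := Multiset.mem_toFinset.mp (Finset.mem_sigma.mp hp).2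
      have hpos : 0 < p.2 := p.1.parts_pos hmem
      have hle : p.2 ≤ n := by
        have := Multiset.single_le_sum (fun i hi => Nat.zero_le i) _ hmem
        rwa [p.1.parts_sum] at this
      exact Finset.mem_Icc.mpr ⟨hpos, hle⟩
    · exact Finset.mem_univ _
  · intro q hq
    rw [Finset.mem_sigma]
    refine ⟨Finset.mem_univ _, ?_⟩
    exact Multiset.mem_toFinset.mpr (Multiset.mem_cons_self _ _)
  · intro p hp
    have hmem : p.2 ∈ p.1.parts := Multiset.mem_toFinset.mp (Finset.mem_sigma.mp hp).2
    obtain ⟨μ, m⟩ := p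
    apply Sigma.ext
    · apply Nat.Partition.ext
      exact Multiset.cons_erase hmem
    · rfl
  · intro q hq
    obtain ⟨m, ν⟩ := q
    apply Sigma.ext
    · rfl
    · apply heq_of_eq
      apply Nat.Partition.ext
      exact Multiset.erase_cons_head _ _
  · intro p hp
    rfl

end Stmt5Aux

namespace Stmt5Aux

lemma aa_eq (lam : ℝ) (p : ℕ) : aa lam p = 2 - 2 * Real.cos (p * lam) := by
  have hc : Real.cos ((p:ℝ) * lam) = 2 * Real.cos ((p:ℝ) * lam / 2) ^ 2 - 1 := by
    rw [← Real.cos_two_mul]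
    congr 1
    ring
  have h2 := Real.sin_sq_add_cos_sq ((p:ℝ) * lam / 2)
  rw [aa, hc]
  linear_combination 4 * h2

lemma lemC (lam : ℝ) (n : ℕ) :
    aa lam (n+1) - aa lam n + aa lam 1 * ∑ m ∈ Icc 1 n, aa lam m
      = (2*(n:ℝ)+1) * aa lam 1 := by
  induction n with
  | zero =>
      simp [aa_eq]
  | succ k IH =>
      rw [Finset.sum_Icc_succ_top (by omega : 1 ≤ k + 1)]
      have key : Real.cos (((k:ℝ)+1+1) * lam) + Real.cos ((k:ℝ) * lam)
          = 2 * Real.cos (((k:ℝ)+1) * lam) * Real.cos ((1:ℝ) * lam) := by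
        have h1 : ((k:ℝ)+1+1) * lam = (((k:ℝ)+1) * lam) + (1:ℝ) * lam := by ring
        have h2 : (k:ℝ) * lam = (((k:ℝ)+1) * lam) - (1:ℝ) * lam := by ring
        rw [h1, h2, Real.cos_add, Real.cos_sub]
        ring
      simp only [aa_eq] at *
      push_cast at *
      linear_combination IH - 2 * key

lemma lemT (lam : ℝ) (n : ℕ) :
    aa lam (n+1) + (∑ m ∈ Icc 1 n, aa lam m * ((n:ℝ) + 1 - (m:ℝ))) * aa lam 1
      = ((n:ℝ)+1)^2 * aa lam 1 := by
  induction n with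
  | zero => simp
  | succ k IH =>
      have hsplit : ∑ m ∈ Icc 1 (k+1), aa lam m * (((k+1:ℕ):ℝ) + 1 - (m:ℝ))
          = (∑ m ∈ Icc 1 k, aa lam m * ((k:ℝ) + 1 - (m:ℝ)))
            + aa lam (k+1) * (((k:ℝ)+1) - ((k+1:ℕ):ℝ))
            + ∑ m ∈ Icc 1 (k+1), aa lam m := by
        have h1 : ∀ m : ℕ, aa lam m * (((k+1:ℕ):ℝ) + 1 - (m:ℝ))
            = (aa lam m * ((k:ℝ) + 1 - (m:ℝ)) + aa lam m) := by
          intro m; push_cast; ring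
        rw [Finset.sum_congr rfl (fun m _ => h1 m), Finset.sum_add_distrib,
          Finset.sum_Icc_succ_top (by omega : 1 ≤ k + 1)]
      rw [hsplit]
      have hC := lemC lam (k+1)
      push_cast at *
      linear_combination IH + hC

lemma g_eq (lam : ℝ) : ∀ n : ℕ, 1 ≤ n → g lam n = (n:ℝ) * aa lam 1 := by
  intro n
  induction n using Nat.strong_induction_on with
  | _ n IH =>
    intro hn
    obtain ⟨k, rfl⟩ : ∃ k, n = k + 1 := ⟨n - 1, by omega⟩
    have hrec := g_rec lam (k+1)
    rw [Finset.sum_Icc_succ_top (by omega : 1 ≤ k + 1)] at hrec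
    have h0 : k + 1 - (k+1) = 0 := by omega
    rw [h0, g_zero, mul_one] at hrec
    have hsum : ∑ m ∈ Icc 1 k, aa lam m * g lam (k+1-m)
        = ∑ m ∈ Icc 1 k, aa lam m * ((k:ℝ) + 1 - (m:ℝ)) * aa lam 1 := by
      apply Finset.sum_congr rfl
      intro m hm
      have hm' := Finset.mem_Icc.mp hm
      have h1 : 1 ≤ k + 1 - m := by omega
      have h2 : k + 1 - m < k + 1 := by omega
      rw [IH _ h2 h1]
      have hc : ((k+1-m : ℕ):ℝ) = (k:ℝ) + 1 - (m:ℝ) := by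
        have : m ≤ k + 1 := by omega
        push_cast [Nat.cast_sub this]
        ring
      rw [hc]; ring
    rw [hsum, ← Finset.sum_mul] at hrec
    have hT := lemT lam k
    have hne : ((k:ℝ)+1) ≠ 0 := by positivity
    apply mul_left_cancel₀ (a := ((k:ℝ)+1)) hne
    push_cast at *
    rw [hrec]
    linear_combination hT

end Stmt5Aux

theorem stmt_5 (lam : ℝ) (n : ℕ) (hn : 0 < n) :
    (n : ℝ) * (2 * Real.sin (lam / 2)) ^ 2 =
      ∑ mu : Nat.Partition n,
        (1 / ((∏ k ∈ mu.parts.toFinset, (Nat.factorial (mu.parts.count k)) : ℕ) *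
              (mu.parts.prod : ℕ) : ℝ)) *
          (mu.parts.map (fun p => (2 * Real.sin (p * lam / 2)) ^ 2)).prod := by
  have h1 : ∑ mu : Nat.Partition n,
        (1 / ((∏ k ∈ mu.parts.toFinset, (Nat.factorial (mu.parts.count k)) : ℕ) *
              (mu.parts.prod : ℕ) : ℝ)) *
          (mu.parts.map (fun p => (2 * Real.sin (p * lam / 2)) ^ 2)).prod = Stmt5Aux.g lam n := by
    apply Finset.sum_congr rfl
    intro mu _
    have hz : ((Stmt5Aux.zfac mu.parts : ℕ) : ℝ)
        = ((∏ k ∈ mu.parts.toFinset, (Nat.factorial (mu.parts.count k)) : ℕ) : ℝ) *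
          ((mu.parts.prod : ℕ) : ℝ) := by
      rw [Stmt5Aux.zfac]; push_cast; ring
    rw [hz.symm]
    congr 1
    simp only [bind_pure_comp]
    rw [show (Nat.cast <$> mu.parts : Multiset ℝ) = mu.parts.map (fun a : ℕ => (a:ℝ)) from rfl,
      Multiset.map_map]
    rfl
  rw [h1, Stmt5Aux.g_eq lam n hn]
  have : Stmt5Aux.aa lam 1 = (2 * Real.sin (lam / 2)) ^ 2 := by
    rw [Stmt5Aux.aa]
    norm_num
  rw [this]
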